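/- Let ν be a Borel probability measure on the unit sphere S^{d-1} of ℝ^d (d ≥ 2) with mean m = ∫_{S^{d-1}} x dν(x). Then there exists a Borel probability measure ν̄ on S^{d-1} with zero mean such that d_C(ν, ν̄) ≤ 2‖m‖. -/

import Mathlib

open MeasureTheory Metric Set

noncomputable section

abbrev Euc (d : ℕ) := EuclideanSpace ℝ (Fin d)

variable {d : ℕ}

/-- Support function of a set, evaluated at `u`. -/
def suppFn (M : Set (Euc d)) (u : Euc d) : ℝ := sSup ((fun x => (inner ℝ x u : ℝ)) '' M)

/-- Nonempty compact convex subsets of the closed unit ball. -/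
def UnitBallConvex (d : ℕ) : Type :=
  {M : Set (Euc d) // M.Nonempty ∧ IsCompact M ∧ Convex ℝ M ∧ M ⊆ closedBall 0 1}

/-- Convex-dual distance between measures. -/
def dC (μ ν : Measure (Euc d)) : ℝ :=
  ⨆ M : UnitBallConvex d,
    |(∫ u in sphere (0 : Euc d) 1, suppFn M.1 u ∂μ) -
      ∫ u in sphere (0 : Euc d) 1, suppFn M.1 u ∂ν|

/-- Weak rotundity. -/
def rotund (μ : Measure (Euc d)) : ℝ :=
  ⨅ y : sphere (0 : Euc d) 1,
    ∫ v in sphere (0 : Euc d) 1, max (inner ℝ (y : Euc d) v : ℝ) 0 ∂μ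

/-- `v` is a unit outer normal of `K` at `x`. -/
def IsUnitOuterNormal (K : Set (Euc d)) (x v : Euc d) : Prop :=
  ‖v‖ = 1 ∧ ∀ y ∈ K, 0 ≤ (inner ℝ (x - y) v : ℝ)

open Classical in
/-- Gauss map: the unique unit outer normal where it exists. -/
def gaussMap (K : Set (Euc d)) (x : Euc d) : Euc d :=
  if h : ∃! v, IsUnitOuterNormal K x v then h.choose else 0

/-- Surface area measure of `K`. -/
def surfaceMeasure (K : Set (Euc d)) : Measure (Euc d) :=
  Measure.map (gaussMap K)
    ((Measure.hausdorffMeasure ((d : ℝ) - 1)).restrict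
      {x | x ∈ frontier K ∧ ∃! v, IsUnitOuterNormal K x v})

/-- Convex body. -/
def IsConvexBody (K : Set (Euc d)) : Prop :=
  IsCompact K ∧ Convex ℝ K ∧ (interior K).Nonempty

/-- First mixed volume `V₁(K, L)`. -/
def mixedVol1 (K L : Set (Euc d)) : ℝ :=
  (1 / d) * ∫ u in sphere (0 : Euc d) 1, suppFn L u ∂(surfaceMeasure K)

/-- Volume (Lebesgue measure). -/
def vol (K : Set (Euc d)) : ℝ := (volume K).toReal

def inradius (K : Set (Euc d)) : ℝ :=
  sSup {r : ℝ | 0 ≤ r ∧ ∃ x, closedBall x r ⊆ K}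

def circumradius (K : Set (Euc d)) : ℝ :=
  sInf {r : ℝ | 0 ≤ r ∧ ∃ x, K ⊆ closedBall x r}

end

section Aux
variable {d : ℕ}

lemma suppFn_bddAbove {M : Set (Euc d)} (hsub : M ⊆ closedBall 0 1) (v : Euc d) :
    BddAbove ((fun x => (inner ℝ x v : ℝ)) '' M) := by
  refine ⟨‖v‖, ?_⟩
  rintro y ⟨x, hx, rfl⟩
  calc (inner ℝ x v : ℝ) ≤ ‖x‖ * ‖v‖ := real_inner_le_norm x v
    _ ≤ 1 * ‖v‖ := by gcongr; exact mem_closedBall_zero_iff.mp (hsub hx)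
    _ = ‖v‖ := one_mul _

lemma suppFn_abs_le {M : Set (Euc d)} (hne : M.Nonempty) (hsub : M ⊆ closedBall 0 1)
    {v : Euc d} (hv : ‖v‖ ≤ 1) : |suppFn M v| ≤ 1 := by
  obtain ⟨x0, hx0⟩ := hne
  have key : ∀ y ∈ (fun x => (inner ℝ x v : ℝ)) '' M, y ≤ 1 := by
    rintro y ⟨x, hx, rfl⟩
    have hx1 : ‖x‖ ≤ 1 := mem_closedBall_zero_iff.mp (hsub hx)
    calc (inner ℝ x v : ℝ) ≤ ‖x‖ * ‖v‖ := real_inner_le_norm x v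
      _ ≤ 1 := by nlinarith [norm_nonneg x, norm_nonneg v]
  rw [abs_le]
  constructor
  · have h1 : (-1 : ℝ) ≤ inner ℝ x0 v := by
      have h := abs_real_inner_le_norm x0 v
      have hx1 : ‖x0‖ ≤ 1 := mem_closedBall_zero_iff.mp (hsub hx0)
      have := abs_le.mp (le_trans h (by nlinarith [norm_nonneg x0, norm_nonneg v] :
        ‖x0‖ * ‖v‖ ≤ 1))
      exact this.1
    exact le_trans h1 (le_csSup (suppFn_bddAbove hsub v) ⟨x0, hx0, rfl⟩)
  · exact csSup_le ⟨_, ⟨x0, hx0, rfl⟩⟩ key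

lemma suppFn_lipschitz {M : Set (Euc d)} (hne : M.Nonempty) (hsub : M ⊆ closedBall 0 1) :
    LipschitzWith 1 (suppFn M) := by
  have key : ∀ u v : Euc d, suppFn M u ≤ suppFn M v + ‖u - v‖ := by
    intro u v
    refine csSup_le (hne.image _) ?_
    rintro y ⟨x, hx, rfl⟩
    have h1 : (inner ℝ x v : ℝ) ≤ suppFn M v := le_csSup (suppFn_bddAbove hsub v) ⟨x, hx, rfl⟩
    have h2 : (inner ℝ x (u - v) : ℝ) ≤ ‖u - v‖ := by
      calc (inner ℝ x (u - v) : ℝ) ≤ ‖x‖ * ‖u - v‖ := real_inner_le_norm _ _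
        _ ≤ 1 * ‖u - v‖ := by gcongr; exact mem_closedBall_zero_iff.mp (hsub hx)
        _ = ‖u - v‖ := one_mul _
    have h3 : (inner ℝ x u : ℝ) = inner ℝ x v + inner ℝ x (u - v) := by
      rw [← inner_add_right]; congr 1; abel
    linarith
  refine LipschitzWith.of_dist_le_mul fun u v => ?_
  rw [NNReal.coe_one, one_mul, Real.dist_eq, dist_eq_norm, abs_sub_le_iff]
  have hrev : ‖v - u‖ = ‖u - v‖ := norm_sub_rev v u
  exact ⟨by linarith [key u v], by linarith [key v u]⟩

lemma integrable_on_sphere {E : Type*} [NormedAddCommGroup E] [NormedSpace ℝ E]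
    (μ : Measure (Euc d)) [IsFiniteMeasure μ] (f : Euc d → E) (hf : Continuous f) (C : ℝ)
    (hC : ∀ x ∈ sphere (0 : Euc d) 1, ‖f x‖ ≤ C) :
    Integrable f (μ.restrict (sphere (0 : Euc d) 1)) := by
  refine Integrable.mono' (integrable_const C) hf.aestronglyMeasurable ?_
  filter_upwards [ae_restrict_mem (isClosed_sphere.measurableSet)] with x hx using hC x hx

end Aux
lemma setIntegral_perturb {d : ℕ} {E : Type*} [NormedAddCommGroup E] [NormedSpace ℝ E]
    [CompleteSpace E]
    (ν : Measure (Euc d)) [IsProbabilityMeasure ν] {u : Euc d}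
    (hu : u ∈ sphere (0 : Euc d) 1) (t : ℝ) (ht : 0 ≤ t) (f : Euc d → E) (hf : Continuous f)
    (C : ℝ) (hC : ∀ x ∈ sphere (0 : Euc d) 1, ‖f x‖ ≤ C) :
    ∫ x in sphere (0 : Euc d) 1, f x
        ∂((ENNReal.ofReal (1 + t))⁻¹ • (ν + ENNReal.ofReal t • Measure.dirac u))
      = (1 + t)⁻¹ • ((∫ x in sphere (0 : Euc d) 1, f x ∂ν) + t • f u) := by
  classical
  set s : Set (Euc d) := sphere (0 : Euc d) 1 with hs
  have h1 : Integrable f (ν.restrict s) := integrable_on_sphere ν f hf C hC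
  have h2 : Integrable f ((Measure.dirac u).restrict s) := integrable_on_sphere _ f hf C hC
  have e1 : (((ENNReal.ofReal (1 + t))⁻¹ •
        (ν + ENNReal.ofReal t • Measure.dirac u)).restrict s)
      = (ENNReal.ofReal (1 + t))⁻¹ •
        (ν.restrict s + ENNReal.ofReal t • (Measure.dirac u).restrict s) := by
    rw [Measure.restrict_smul, Measure.restrict_add, Measure.restrict_smul]
  rw [show (∫ x in s, f x
      ∂((ENNReal.ofReal (1 + t))⁻¹ • (ν + ENNReal.ofReal t • Measure.dirac u)))
      = ∫ x, f x ∂((ENNReal.ofReal (1 + t))⁻¹ •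
        (ν.restrict s + ENNReal.ofReal t • (Measure.dirac u).restrict s)) from by rw [← e1]]
  rw [integral_smul_measure,
    integral_add_measure h1 (h2.smul_measure ENNReal.ofReal_ne_top),
    integral_smul_measure]
  have hd : (∫ x, f x ∂((Measure.dirac u).restrict s)) = f u := by
    rw [show (∫ x, f x ∂((Measure.dirac u).restrict s)) = ∫ x in s, f x ∂(Measure.dirac u)
      from rfl, setIntegral_dirac f u s, if_pos hu]
  rw [hd, ENNReal.toReal_inv, ENNReal.toReal_ofReal (by linarith), ENNReal.toReal_ofReal ht]


instance unitBallConvexNonempty {d : ℕ} : Nonempty (UnitBallConvex d) :=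
  ⟨⟨{0}, singleton_nonempty 0, isCompact_singleton, convex_singleton 0, by
    simp [singleton_subset_iff]⟩⟩

/-- A probability measure on the sphere with mean `m` can be perturbed, by
at most `2‖m‖` in convex-dual distance, into a probability measure with zero mean. -/
theorem exists_zero_mean_perturbation (d : ℕ) (hd : 2 ≤ d) (ν : Measure (Euc d))
    [IsProbabilityMeasure ν] (hν : ν ((sphere (0 : Euc d) 1)ᶜ) = 0) :
    ∃ νbar : Measure (Euc d), IsProbabilityMeasure νbar ∧
      νbar ((sphere (0 : Euc d) 1)ᶜ) = 0 ∧
      (∫ x in sphere (0 : Euc d) 1, x ∂νbar) = 0 ∧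
      dC ν νbar ≤ 2 * ‖∫ x in sphere (0 : Euc d) 1, x ∂ν‖ := by
  classical
  set s : Set (Euc d) := sphere (0 : Euc d) 1 with hs
  have hsmeas : MeasurableSet s := isClosed_sphere.measurableSet
  set m : Euc d := ∫ x in s, x ∂ν with hm
  by_cases hm0 : m = 0
  · refine ⟨ν, inferInstance, hν, hm0, ?_⟩
    have h1 : dC ν ν ≤ 0 := ciSup_le fun M => by simp
    have h2 : (0:ℝ) ≤ 2 * ‖m‖ := by positivity
    exact h1.trans h2
  · set t : ℝ := ‖m‖ with htdef
    have ht : 0 < t := norm_pos_iff.mpr hm0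
    set u : Euc d := -(t⁻¹ • m) with hu
    have hunorm : ‖u‖ = 1 := by
      rw [hu, norm_neg, norm_smul, norm_inv, norm_norm, ← htdef, inv_mul_cancel₀ ht.ne']
    have hus : u ∈ s := by rw [hs, mem_sphere_zero_iff_norm, hunorm]
    set νbar : Measure (Euc d) :=
      (ENNReal.ofReal (1 + t))⁻¹ • (ν + ENNReal.ofReal t • Measure.dirac u) with hνbar
    have hofadd : ENNReal.ofReal (1 + t) = 1 + ENNReal.ofReal t := by
      rw [ENNReal.ofReal_add zero_le_one ht.le, ENNReal.ofReal_one]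
    have hne0 : ENNReal.ofReal (1 + t) ≠ 0 := by
      simp [ENNReal.ofReal_eq_zero]; linarith
    have hprob : IsProbabilityMeasure νbar := by
      constructor
      rw [hνbar, Measure.smul_apply, Measure.add_apply, Measure.smul_apply,
        measure_univ, measure_univ, smul_eq_mul, smul_eq_mul, mul_one, ← hofadd]
      exact ENNReal.inv_mul_cancel hne0 ENNReal.ofReal_ne_top
    have hnull : νbar sᶜ = 0 := by
      rw [hνbar, Measure.smul_apply, Measure.add_apply, Measure.smul_apply, hν,
        Measure.dirac_apply' u hsmeas.compl]
      simp [hus]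
    have hmean : (∫ x in s, x ∂νbar) = 0 := by
      rw [hνbar, setIntegral_perturb ν hus t ht.le (fun x => x) continuous_id 1
        (fun x hx => le_of_eq (mem_sphere_zero_iff_norm.mp hx)), ← hm]
      have : t • u = -m := by
        rw [hu, smul_neg, smul_smul, mul_inv_cancel₀ ht.ne', one_smul]
      rw [this, add_neg_cancel, smul_zero]
    refine ⟨νbar, hprob, hnull, hmean, ?_⟩
    rw [show dC ν νbar ≤ 2 * ‖∫ x in sphere (0 : Euc d) 1, x ∂ν‖ ↔
        dC ν νbar ≤ 2 * t from by rw [← hm, ← htdef]]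
    refine ciSup_le fun M => ?_
    obtain ⟨hMne, hMcomp, hMconv, hMsub⟩ := M.2
    have hlip := suppFn_lipschitz hMne hMsub
    have hbound : ∀ x ∈ s, ‖suppFn M.1 x‖ ≤ 1 := fun x hx =>
      suppFn_abs_le hMne hMsub (le_of_eq (mem_sphere_zero_iff_norm.mp hx))
    set A : ℝ := ∫ x in s, suppFn M.1 x ∂ν with hA
    have hAle : |A| ≤ 1 := by
      have h := norm_setIntegral_le_of_norm_le_const (f := suppFn M.1) (s := s) (μ := ν)
        (C := 1) (measure_lt_top ν s) hbound
      have h2 : (ν s).toReal ≤ 1 := by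
        have := ENNReal.toReal_mono (measure_ne_top ν univ) (measure_mono (subset_univ s))
        simpa using this
      calc |A| ≤ 1 * (ν s).toReal := h
        _ ≤ 1 := by linarith
    have hSu : |suppFn M.1 u| ≤ 1 := suppFn_abs_le hMne hMsub (le_of_eq hunorm)
    have hB : (∫ x in s, suppFn M.1 x ∂νbar)
        = (1 + t)⁻¹ * (A + t * suppFn M.1 u) := by
      rw [hνbar, setIntegral_perturb ν hus t ht.le _ hlip.continuous 1 hbound,
        smul_eq_mul, smul_eq_mul, ← hA]
    rw [show (∫ x in sphere (0 : Euc d) 1, suppFn M.1 x ∂νbar)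
        = (1 + t)⁻¹ * (A + t * suppFn M.1 u) from hB]
    set B : ℝ := suppFn M.1 u with hBdef
    have key : A - (1 + t)⁻¹ * (A + t * B) = (1 + t)⁻¹ * (t * (A - B)) := by
      have h1t : (1 + t) ≠ 0 := by linarith
      field_simp
      ring
    rw [key, abs_mul, abs_mul, abs_of_pos (show (0:ℝ) < (1+t)⁻¹ by positivity),
      abs_of_pos ht]
    have hAB : |A - B| ≤ 2 := by
      calc |A - B| ≤ |A| + |B| := abs_sub A B
        _ ≤ 2 := by linarith
    have hinv : (1 + t)⁻¹ ≤ 1 := by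
      rw [inv_le_one_iff₀]; right; linarith
    calc (1 + t)⁻¹ * (t * |A - B|) ≤ 1 * (t * |A - B|) :=
          mul_le_mul_of_nonneg_right hinv (by positivity)
      _ = t * |A - B| := one_mul _
      _ ≤ t * 2 := mul_le_mul_of_nonneg_left hAB ht.le
      _ = 2 * t := by ring
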